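/- Let w ∈ ℂ² be a unit vector. Then max_{x∈{0,1}} |⟨x|w⟩|² + max_{x∈{0,1}} |⟨x|Hw⟩|² ≤ 1 + 1/√2. Equivalently, the bias of the outcome of measuring w in the computational basis plus the bias of the outcome of measuring w in the Hadamard basis is at most √2. -/

import Mathlib

/-- The 2×2 Hadamard matrix `(1/√2)·[[1,1],[1,-1]]`. -/
noncomputable def Hmat : Matrix (Fin 2) (Fin 2) ℂ :=
  ((1 / Real.sqrt 2 : ℝ) : ℂ) • !![1, 1; 1, -1]

lemma key_ineq (p q r s : ℝ) (h : p^2 + q^2 + r^2 + s^2 = 1)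
    (s2 : ℝ) (hs2 : s2 ^ 2 = 2) (hs2pos : 0 < s2) :
    (p^2 + q^2 - r^2 - s^2) + 2*(p*r + q*s) ≤ s2 := by
  have h1 : (p^2 + q^2 - r^2 - s^2)^2 + (2*(p*r + q*s))^2 ≤ 1 := by
    nlinarith [sq_nonneg (p*s - q*r), sq_nonneg (p*s + q*r)]
  nlinarith [sq_nonneg ((p^2 + q^2 - r^2 - s^2) - 2*(p*r + q*s)),
    sq_nonneg ((p^2 + q^2 - r^2 - s^2) + 2*(p*r + q*s) - s2)]

/-- For any unit vector `w ∈ ℂ²`,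
`max_x |⟨x|w⟩|² + max_x |⟨x|Hw⟩|² ≤ 1 + 1/√2`, i.e. the sum of the maximal outcome
probabilities of measuring `w` in the computational and in the Hadamard basis is at
most `1 + 1/√2`. -/
theorem stmt9 (w : Fin 2 → ℂ) (hw : ‖w 0‖ ^ 2 + ‖w 1‖ ^ 2 = 1) :
    max (‖w 0‖ ^ 2) (‖w 1‖ ^ 2)
      + max (‖Hmat.mulVec w 0‖ ^ 2) (‖Hmat.mulVec w 1‖ ^ 2)
      ≤ 1 + 1 / Real.sqrt 2 := by
  set s2 := Real.sqrt 2 with hs2def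
  have hs2 : s2 ^ 2 = 2 := Real.sq_sqrt (by norm_num)
  have hs2pos : 0 < s2 := Real.sqrt_pos.mpr (by norm_num)
  have h0 : Hmat.mulVec w 0 = ((1 / s2 : ℝ) : ℂ) * (w 0 + w 1) := by
    simp [Hmat, Matrix.mulVec, dotProduct, Fin.sum_univ_two]
    ring
  have h1 : Hmat.mulVec w 1 = ((1 / s2 : ℝ) : ℂ) * (w 0 - w 1) := by
    simp [Hmat, Matrix.mulVec, dotProduct, Fin.sum_univ_two]
    ring
  have hn : ∀ z : ℂ, ‖((1 / s2 : ℝ) : ℂ) * z‖ ^ 2 = (1/2) * ‖z‖ ^ 2 := by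
    intro z
    rw [norm_mul, mul_pow, Complex.norm_real, Real.norm_of_nonneg (by positivity)]
    rw [div_pow, hs2]
    ring
  rw [h0, h1, hn, hn]
  set p := (w 0).re
  set q := (w 0).im
  set r := (w 1).re
  set s := (w 1).im
  have e0 : ‖w 0‖ ^ 2 = p^2 + q^2 := by
    simp [Complex.sq_norm, Complex.normSq_apply]; ring
  have e1 : ‖w 1‖ ^ 2 = r^2 + s^2 := by
    simp [Complex.sq_norm, Complex.normSq_apply]; ring
  have e2 : ‖w 0 + w 1‖ ^ 2 = (p+r)^2 + (q+s)^2 := by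
    simp [Complex.sq_norm, Complex.normSq_apply]; ring
  have e3 : ‖w 0 - w 1‖ ^ 2 = (p-r)^2 + (q-s)^2 := by
    simp [Complex.sq_norm, Complex.normSq_apply]; ring
  rw [e0, e1, e2, e3]
  rw [e0, e1] at hw
  have hs2' : s2 * s2 = 2 := by nlinarith
  have hinv : 1 / s2 = s2 / 2 := by
    field_simp
    linarith [hs2']
  rw [hinv]
  clear h0 h1 hn e0 e1 e2 e3 hinv hs2' hs2def
  clear_value p q r s s2
  rcases max_cases (p^2+q^2) (r^2+s^2) with ⟨hm1, _⟩ | ⟨hm1, _⟩ <;>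
    rcases max_cases ((1:ℝ)/2 * ((p+r)^2+(q+s)^2)) ((1:ℝ)/2 * ((p-r)^2+(q-s)^2)) with ⟨hm2, _⟩ | ⟨hm2, _⟩ <;>
    rw [hm1, hm2]
  · nlinarith [key_ineq p q r s (by linarith) s2 hs2 hs2pos]
  · nlinarith [key_ineq p q (-r) (-s) (by linarith : p^2+q^2+(-r)^2+(-s)^2 = 1) s2 hs2 hs2pos]
  · nlinarith [key_ineq r s p q (by linarith) s2 hs2 hs2pos]
  · nlinarith [key_ineq r s (-p) (-q) (by linarith : r^2+s^2+(-p)^2+(-q)^2 = 1) s2 hs2 hs2pos]
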